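/- The set B_DNC of strings that are not initial segments of any diagonally non-computable function is 2-small above the empty string. -/

import Mathlib

/-- A finite set of strings (lists of naturals) is a tree if it is closed under prefixes. -/
def PrefixClosed (T : Finset (List ℕ)) : Prop :=
  ∀ τ ∈ T, ∀ ρ : List ℕ, ρ <+: τ → ρ ∈ T

/-- `τ` is a leaf of the finite tree `T`: it belongs to `T` and has no child in `T`. -/
def IsLeaf (T : Finset (List ℕ)) (τ : List ℕ) : Prop :=
  τ ∈ T ∧ ∀ a : ℕ, τ ++ [a] ∉ T

/-- `T` is a finite tree that is `k`-bushy above `σ`: it is a tree with stem `σ`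
(every element is comparable with `σ`) and every non-leaf element of `T` extending `σ`
has at least `k` immediate children in `T`. -/
def Bushy (k : ℕ) (σ : List ℕ) (T : Finset (List ℕ)) : Prop :=
  PrefixClosed T ∧ σ ∈ T ∧ (∀ τ ∈ T, τ <+: σ ∨ σ <+: τ) ∧
    ∀ τ ∈ T, σ <+: τ → ¬ IsLeaf T τ →
      ∃ S : Finset ℕ, k ≤ S.card ∧ ∀ a ∈ S, τ ++ [a] ∈ T

/-- `B` is `k`-big above `σ`: there is a finite tree `k`-bushy above `σ`
all of whose leaves are in `B`. -/
def BigAbove (k : ℕ) (σ : List ℕ) (B : Set (List ℕ)) : Prop :=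
  ∃ T : Finset (List ℕ), Bushy k σ T ∧ ∀ τ : List ℕ, IsLeaf T τ → τ ∈ B

/-- `B` is `k`-small above `σ`: it is not `k`-big above `σ`. -/
def SmallAbove (k : ℕ) (σ : List ℕ) (B : Set (List ℕ)) : Prop :=
  ¬ BigAbove k σ B

/-- The set of strings that are not initial segments of any diagonally non-computable
function: those `σ` such that for some `e < |σ|`, the `e`-th partial computable function
(under the standard enumeration by `Nat.Partrec.Code`) halts on `e` with value `σ(e)`. -/
def BDNC : Set (List ℕ) :=
  {σ : List ℕ | ∃ e < σ.length,
    σ.getD e 0 ∈ Nat.Partrec.Code.eval (Denumerable.ofNat Nat.Partrec.Code e) e}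

lemma bdnc_child_unique {τ : List ℕ} (hτ : τ ∉ BDNC) {a b : ℕ}
    (ha : τ ++ [a] ∈ BDNC) (hb : τ ++ [b] ∈ BDNC) : a = b := by
  obtain ⟨e, he, hev⟩ := ha
  obtain ⟨f, hf, hfv⟩ := hb
  simp [List.length_append] at he hf
  have hae : e = τ.length := by
    by_contra h
    have hlt : e < τ.length := lt_of_le_of_ne he h
    exact hτ ⟨e, hlt, by rwa [List.getD_append _ _ _ _ hlt] at hev⟩
  have hbf : f = τ.length := by
    by_contra h
    have hlt : f < τ.length := lt_of_le_of_ne hf h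
    exact hτ ⟨f, hlt, by rwa [List.getD_append _ _ _ _ hlt] at hfv⟩
  subst hae; subst hbf
  have h1 : (τ ++ [a]).getD τ.length 0 = a := by
    simp [List.getD_append_right, List.getD]
  have h2 : (τ ++ [b]).getD τ.length 0 = b := by
    simp [List.getD_append_right, List.getD]
  rw [h1] at hev; rw [h2] at hfv
  exact Part.mem_unique hev hfv

/-- **`B_DNC` is 2-small above the empty string.** -/
theorem bdnc_two_small : SmallAbove 2 [] BDNC := by
  rintro ⟨T, ⟨hpc, hnil, _, hbushy⟩, hleaf⟩
  classical
  set G : Finset (List ℕ) := T.filter (fun τ => τ ∉ BDNC) with hG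
  have hGne : G.Nonempty := ⟨[], by
    simp [hG, hnil, BDNC]⟩
  obtain ⟨τ, hτG, hmax⟩ := G.exists_max_image List.length hGne
  have hτT : τ ∈ T := (Finset.mem_filter.mp hτG).1
  have hτB : τ ∉ BDNC := (Finset.mem_filter.mp hτG).2
  have hnotleaf : ¬ IsLeaf T τ := fun h => hτB (hleaf τ h)
  obtain ⟨S, hScard, hSchild⟩ := hbushy τ hτT List.nil_prefix hnotleaf
  have : ∃ a ∈ S, τ ++ [a] ∉ BDNC := by
    by_contra h
    push_neg at h
    have : S.card ≤ 1 := Finset.card_le_one.mpr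
      (fun a ha b hb => bdnc_child_unique hτB (h a ha) (h b hb))
    omega
  obtain ⟨a, haS, haB⟩ := this
  have hmem : τ ++ [a] ∈ G := Finset.mem_filter.mpr ⟨hSchild a haS, haB⟩
  have := hmax _ hmem
  simp at this
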